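/- Let X denote the lexicographic product ω₁ ×ₗ ℚ. The group of order automorphisms of X acts transitively: for all x, y ∈ X there exists an order isomorphism π : X ≃o X with π(x) = y. -/

import Mathlib

/-- The linearly ordered set `ω₁` of countable ordinals, realized as the canonical type
of order type `ω₁ = (ℵ₁).ord`. -/
abbrev OmegaOne : Type := (Cardinal.aleph 1).ord.ToType

/-- The lexicographic product `ω₁ ×ₗ ℚ`. -/
abbrev KrivineX : Type := OmegaOne ×ₗ ℚ

instance : IsWellOrder OmegaOne (· < ·) := isWellOrder_lt

instance (s : Set OmegaOne) : IsWellOrder (Subtype s) (Subrel ((· < ·) : OmegaOne → OmegaOne → Prop) s) :=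
  inferInstanceAs (IsWellOrder _ (Subrel ((· < ·) : OmegaOne → OmegaOne → Prop) (· ∈ s)))

/-- A lexicographic product is densely ordered whenever the second factor is densely
ordered and has no maximum. -/
instance lexDenselyOrdered {α β : Type*} [Preorder α] [Preorder β] [DenselyOrdered β]
    [NoMaxOrder β] : DenselyOrdered (α ×ₗ β) where
  dense := by
    rintro _ _ (@⟨a₁, b₁, a₂, b₂, h⟩ | @⟨a, b₁, b₂, h⟩)
    · obtain ⟨c, hc⟩ := exists_gt b₁
      exact ⟨toLex (a₁, c), Prod.Lex.right _ hc, Prod.Lex.left _ _ h⟩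
    · obtain ⟨c, h₁, h₂⟩ := exists_between h
      exact ⟨toLex (a, c), Prod.Lex.right _ h₁, Prod.Lex.right _ h₂⟩

lemma lex_lt_iff {α β : Type*} [LinearOrder α] [LinearOrder β] (u v : α ×ₗ β) :
    u < v ↔ (ofLex u).1 < (ofLex v).1 ∨ ((ofLex u).1 = (ofLex v).1 ∧ (ofLex u).2 < (ofLex v).2) :=
  Prod.Lex.lt_iff

lemma countable_Iic_omegaOne (a : OmegaOne) : (Set.Iic a).Countable := by
  have h1 : (Set.Iio a).Countable :=
    (Cardinal.countable_iff_lt_aleph_one _).2 (Cardinal.mk_Iio_ord_toType a)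
  rw [← Set.Iio_insert]
  exact h1.insert a

lemma countable_Iio_X (x : KrivineX) : (Set.Iio x).Countable := by
  haveI : Countable (Set.Iic (ofLex x).1) := (countable_Iic_omegaOne (ofLex x).1).to_subtype
  rw [Set.countable_coe_iff.symm]
  refine Function.Injective.countable
    (f := fun z : Set.Iio x => ((⟨(ofLex z.1).1, ?_⟩ : Set.Iic (ofLex x).1), (ofLex z.1).2)) ?_
  · rcases (lex_lt_iff z.1 x).1 z.2 with h | ⟨h, -⟩
    · exact h.le
    · exact h.le
  · intro z₁ z₂ h
    simp only [Prod.mk.injEq, Subtype.mk.injEq] at h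
    apply Subtype.ext
    exact congrArg toLex (Prod.ext h.1 h.2)

/-- The final segment `(a, →)` of `ω₁` has order type `ω₁` again. -/
lemma type_Ioi_omegaOne (a : OmegaOne) :
    Ordinal.type (Subrel ((· < ·) : OmegaOne → OmegaOne → Prop) (Set.Ioi a))
      = (Cardinal.aleph 1).ord := by
  classical
  set o := (Cardinal.aleph 1).ord with ho
  let f : (↥(Set.Iic a) ⊕ ↥(Set.Ioi a)) → OmegaOne := Sum.elim Subtype.val Subtype.val
  have hbij : Function.Bijective f := by
    constructor
    · rintro (u | u) (v | v) h <;> simp only [f, Sum.elim_inl, Sum.elim_inr] at h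
      · exact congrArg Sum.inl (Subtype.ext h)
      · exact absurd (show a < (u : OmegaOne) from h ▸ v.2) (not_lt.2 u.2)
      · exact absurd (show a < (v : OmegaOne) from h ▸ u.2) (not_lt.2 v.2)
      · exact congrArg Sum.inr (Subtype.ext h)
    · intro z
      rcases le_or_gt z a with hz | hz
      · exact ⟨Sum.inl ⟨z, hz⟩, rfl⟩
      · exact ⟨Sum.inr ⟨z, hz⟩, rfl⟩
  let E : (↥(Set.Iic a) ⊕ ↥(Set.Ioi a)) ≃ OmegaOne := Equiv.ofBijective f hbij
  have e : Sum.Lex (Subrel ((· < ·) : OmegaOne → _ → Prop) (Set.Iic a))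
      (Subrel ((· < ·) : OmegaOne → _ → Prop) (Set.Ioi a)) ≃r
      ((· < ·) : OmegaOne → OmegaOne → Prop) := by
    refine ⟨E, ?_⟩
    rintro (u | u) (v | v)
    · exact ⟨fun h => Sum.Lex.inl h, fun h => by cases h with | inl h => exact h⟩
    · exact iff_of_true (lt_of_le_of_lt u.2 v.2) (Sum.Lex.sep _ _)
    · exact iff_of_false (asymm (lt_of_le_of_lt v.2 u.2)) (Sum.lex_inr_inl)
    · exact ⟨fun h => Sum.Lex.inr h, fun h => by cases h with | inr h => exact h⟩
  have hsum : Ordinal.type (Subrel ((· < ·) : OmegaOne → _ → Prop) (Set.Iic a))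
      + Ordinal.type (Subrel ((· < ·) : OmegaOne → _ → Prop) (Set.Ioi a)) = o := by
    rw [← Ordinal.type_sum_lex, Ordinal.type_eq.2 ⟨e⟩, ho, Ordinal.type_toType]
  have h1 : Ordinal.type (Subrel ((· < ·) : OmegaOne → _ → Prop) (Set.Iic a)) < o := by
    rw [ho, Cardinal.lt_ord, Ordinal.card_type]
    exact (Cardinal.countable_iff_lt_aleph_one _).1 (countable_Iic_omegaOne a)
  by_contra hne
  have h2 : Ordinal.type (Subrel ((· < ·) : OmegaOne → _ → Prop) (Set.Ioi a)) < o := by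
    refine lt_of_le_of_ne ?_ hne
    conv_rhs => rw [← hsum]
    exact le_add_self
  exact absurd hsum (ne_of_lt (Ordinal.isPrincipal_add_ord (Cardinal.aleph0_le_aleph 1) h1 h2))

/-- Any two final segments of `ω₁` are order isomorphic. -/
noncomputable def ioiIsoOmegaOne (a b : OmegaOne) : (Set.Ioi a) ≃o (Set.Ioi b) := by
  have h : Ordinal.type (Subrel ((· < ·) : OmegaOne → _ → Prop) (Set.Ioi a))
      = Ordinal.type (Subrel ((· < ·) : OmegaOne → _ → Prop) (Set.Ioi b)) := by
    rw [type_Ioi_omegaOne, type_Ioi_omegaOne]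
  have e := Classical.choice (Ordinal.type_eq.1 h)
  exact OrderIso.ofRelIsoLT e

/-- Glue an isomorphism of the strict initial segments and one of the strict final segments
of two points into a global order automorphism moving the first point to the second. -/
theorem glue_orderIso {α : Type*} [LinearOrder α] (x y : α)
    (F : (Set.Iio x) ≃o (Set.Iio y)) (G : (Set.Ioi x) ≃o (Set.Ioi y)) :
    ∃ π : α ≃o α, π x = y := by
  classical
  set f : α → α := fun z =>
    if h : z < x then (F ⟨z, h⟩ : α) else if h' : x < z then (G ⟨z, h'⟩ : α) else y with hf
  have hfx : f x = y := by simp [hf]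
  have hFlt : ∀ (z) (h : z < x), (F ⟨z, h⟩ : α) < y := fun z h => (F ⟨z, h⟩).2
  have hGgt : ∀ (z) (h : x < z), y < (G ⟨z, h⟩ : α) := fun z h => (G ⟨z, h⟩).2
  have hmono : StrictMono f := by
    intro z₁ z₂ hlt
    simp only [hf]
    by_cases h1 : z₁ < x
    · rw [dif_pos h1]
      by_cases h2 : z₂ < x
      · rw [dif_pos h2]
        exact Subtype.coe_lt_coe.2 (F.lt_iff_lt.2 (Subtype.mk_lt_mk.2 hlt))
      · rw [dif_neg h2]
        by_cases h3 : x < z₂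
        · rw [dif_pos h3]; exact (hFlt z₁ h1).trans (hGgt z₂ h3)
        · rw [dif_neg h3]; exact hFlt z₁ h1
    · have hx1 : x ≤ z₁ := not_lt.1 h1
      have h3 : x < z₂ := lt_of_le_of_lt hx1 hlt
      rw [dif_neg h1, dif_neg (asymm h3), dif_pos h3]
      by_cases h4 : x < z₁
      · rw [dif_pos h4]
        exact Subtype.coe_lt_coe.2 (G.lt_iff_lt.2 (Subtype.mk_lt_mk.2 hlt))
      · rw [dif_neg h4]
        exact hGgt z₂ h3
  have hsurj : Function.Surjective f := by
    intro w
    rcases lt_trichotomy w y with hw | hw | hw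
    · refine ⟨(F.symm ⟨w, hw⟩ : α), ?_⟩
      have hs : ((F.symm ⟨w, hw⟩ : Set.Iio x) : α) < x := (F.symm ⟨w, hw⟩).2
      simp only [hf]
      rw [dif_pos hs]
      have : F ⟨(F.symm ⟨w, hw⟩ : α), hs⟩ = ⟨w, hw⟩ := by
        exact F.apply_symm_apply _
      rw [this]
    · exact ⟨x, by rw [hfx, hw]⟩
    · refine ⟨(G.symm ⟨w, hw⟩ : α), ?_⟩
      have hs : x < ((G.symm ⟨w, hw⟩ : Set.Ioi x) : α) := (G.symm ⟨w, hw⟩).2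
      simp only [hf]
      rw [dif_neg (asymm hs), dif_pos hs]
      have : G ⟨(G.symm ⟨w, hw⟩ : α), hs⟩ = ⟨w, hw⟩ := by
        exact G.apply_symm_apply _
      rw [this]
  exact ⟨StrictMono.orderIsoOfSurjective f hmono hsurj, hfx⟩

/-- Isomorphism of final segments of a lexicographic product, built from isomorphisms of
final segments of the factors. -/
theorem tail_iso {α β : Type*} [LinearOrder α] [LinearOrder β] (x y : α ×ₗ β)
    (k : (Set.Ioi (ofLex x).1) ≃o (Set.Ioi (ofLex y).1))
    (h : (Set.Ioi (ofLex x).2) ≃o (Set.Ioi (ofLex y).2)) :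
    Nonempty ((Set.Ioi x) ≃o (Set.Ioi y)) := by
  classical
  set a := (ofLex x).1 with ha
  set q := (ofLex x).2 with hq'
  set b := (ofLex y).1 with hb
  set r := (ofLex y).2 with hr
  set g0 : α ×ₗ β → α ×ₗ β := fun z =>
    if hc : a < (ofLex z).1 then toLex ((k ⟨(ofLex z).1, hc⟩ : α), (ofLex z).2)
    else if hq : q < (ofLex z).2 then toLex (b, (h ⟨(ofLex z).2, hq⟩ : β))
    else z with hg0
  have hkgt : ∀ (c) (hc : a < c), b < (k ⟨c, hc⟩ : α) := fun c hc => (k ⟨c, hc⟩).2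
  have hhgt : ∀ (s) (hs : q < s), r < (h ⟨s, hs⟩ : β) := fun s hs => (h ⟨s, hs⟩).2
  have hmem : ∀ z : α ×ₗ β, x < z → y < g0 z := by
    intro z hz
    simp only [hg0]
    by_cases hc : a < (ofLex z).1
    · rw [dif_pos hc]
      exact (lex_lt_iff _ _).2 (Or.inl (hkgt _ hc))
    · rcases (lex_lt_iff x z).1 hz with hlt | ⟨heq, hql⟩
      · exact absurd hlt hc
      · rw [dif_neg hc, dif_pos hql]
        exact (lex_lt_iff _ _).2 (Or.inr ⟨rfl, hhgt _ hql⟩)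
  have hmono : ∀ z₁ z₂ : α ×ₗ β, x < z₁ → x < z₂ → z₁ < z₂ → g0 z₁ < g0 z₂ := by
    intro z₁ z₂ h₁ h₂ hlt
    simp only [hg0]
    by_cases hc₁ : a < (ofLex z₁).1 <;> by_cases hc₂ : a < (ofLex z₂).1
    · rw [dif_pos hc₁, dif_pos hc₂]
      rcases (lex_lt_iff z₁ z₂).1 hlt with hlt' | ⟨heq, hs⟩
      · exact (lex_lt_iff _ _).2
          (Or.inl (Subtype.coe_lt_coe.2 (k.lt_iff_lt.2 (Subtype.mk_lt_mk.2 hlt'))))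
      · have hss : (⟨(ofLex z₁).1, hc₁⟩ : Set.Ioi a) = ⟨(ofLex z₂).1, hc₂⟩ := Subtype.ext heq
        exact (lex_lt_iff _ _).2 (Or.inr ⟨congrArg (fun u => ((k u : Set.Ioi b) : α)) hss, hs⟩)
    · exfalso
      rcases (lex_lt_iff z₁ z₂).1 hlt with hlt' | ⟨heq, -⟩
      · exact hc₂ (hc₁.trans hlt')
      · exact hc₂ (heq ▸ hc₁)
    · rcases (lex_lt_iff x z₁).1 h₁ with hlt' | ⟨heq₁, hq₁⟩
      · exact absurd hlt' hc₁
      · rw [dif_neg hc₁, dif_pos hq₁, dif_pos hc₂]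
        exact (lex_lt_iff _ _).2 (Or.inl (hkgt _ hc₂))
    · rcases (lex_lt_iff x z₁).1 h₁ with hlt' | ⟨heq₁, hq₁⟩
      · exact absurd hlt' hc₁
      rcases (lex_lt_iff x z₂).1 h₂ with hlt' | ⟨heq₂, hq₂⟩
      · exact absurd hlt' hc₂
      rw [dif_neg hc₁, dif_pos hq₁, dif_neg hc₂, dif_pos hq₂]
      rcases (lex_lt_iff z₁ z₂).1 hlt with hlt' | ⟨heq, hs⟩
      · exfalso; rw [← heq₁, ← heq₂] at hlt'; exact lt_irrefl a hlt'
      · exact (lex_lt_iff _ _).2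
          (Or.inr ⟨rfl, Subtype.coe_lt_coe.2 (h.lt_iff_lt.2 (Subtype.mk_lt_mk.2 hs))⟩)
  have hsurj : ∀ w : α ×ₗ β, y < w → ∃ z, x < z ∧ g0 z = w := by
    intro w hw
    by_cases hd : b < (ofLex w).1
    · refine ⟨toLex ((k.symm ⟨(ofLex w).1, hd⟩ : α), (ofLex w).2), ?_, ?_⟩
      · exact (lex_lt_iff _ _).2 (Or.inl (k.symm ⟨_, hd⟩).2)
      · simp only [hg0, ofLex_toLex]
        have hc : a < ((k.symm ⟨(ofLex w).1, hd⟩ : Set.Ioi a) : α) := (k.symm ⟨_, hd⟩).2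
        erw [dif_pos hc]
        have hkk : k ⟨((k.symm ⟨(ofLex w).1, hd⟩ : Set.Ioi a) : α), hc⟩ = ⟨(ofLex w).1, hd⟩ := by
          exact k.apply_symm_apply _
        rw [hkk]
        rfl
    · rcases (lex_lt_iff y w).1 hw with hlt' | ⟨heq, ht⟩
      · exact absurd hlt' hd
      · refine ⟨toLex (a, (h.symm ⟨(ofLex w).2, ht⟩ : β)), ?_, ?_⟩
        · exact (lex_lt_iff _ _).2 (Or.inr ⟨rfl, (h.symm ⟨_, ht⟩).2⟩)
        · simp only [hg0, ofLex_toLex]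
          have hc : ¬ (a < a) := lt_irrefl a
          have hql : q < ((h.symm ⟨(ofLex w).2, ht⟩ : Set.Ioi q) : β) := (h.symm ⟨_, ht⟩).2
          erw [dif_neg hc, dif_pos hql]
          have hhh : h ⟨((h.symm ⟨(ofLex w).2, ht⟩ : Set.Ioi q) : β), hql⟩ = ⟨(ofLex w).2, ht⟩ := by
            exact h.apply_symm_apply _
          rw [hhh]
          exact congrArg toLex (Prod.ext heq rfl)
  refine ⟨?_⟩
  have hmono' : StrictMono (fun z : Set.Ioi x => (⟨g0 z.1, hmem z.1 z.2⟩ : Set.Ioi y)) := by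
    intro z₁ z₂ hlt
    exact Subtype.mk_lt_mk.2 (hmono z₁.1 z₂.1 z₁.2 z₂.2 (Subtype.coe_lt_coe.2 hlt))
  have hsurj' : Function.Surjective
      (fun z : Set.Ioi x => (⟨g0 z.1, hmem z.1 z.2⟩ : Set.Ioi y)) := by
    rintro ⟨w, hw⟩
    obtain ⟨z, hz, hgz⟩ := hsurj w hw
    exact ⟨⟨z, hz⟩, Subtype.ext hgz⟩
  exact StrictMono.orderIsoOfSurjective _ hmono' hsurj'

theorem orderAut_transitive (x y : KrivineX) :
    ∃ π : KrivineX ≃o KrivineX, π x = y := by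
  haveI : Countable (Set.Iio x) := (countable_Iio_X x).to_subtype
  haveI : Countable (Set.Iio y) := (countable_Iio_X y).to_subtype
  obtain ⟨F⟩ := Order.iso_of_countable_dense (α := Set.Iio x) (β := Set.Iio y)
  obtain ⟨h⟩ := Order.iso_of_countable_dense
    (α := (Set.Ioi (ofLex x).2 : Set ℚ)) (β := (Set.Ioi (ofLex y).2 : Set ℚ))
  have k := ioiIsoOmegaOne (ofLex x).1 (ofLex y).1
  obtain ⟨G⟩ := tail_iso x y k h
  exact glue_orderIso x y F G
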